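/- For the generalised factorial with rectangular partition: if λ = (n^N) (N parts all equal to n), α = 2/β, q = 1 + β(N−1)/2, q' = 1 + 2(n−1)/β, and γ' = 2(γ+1)/β − 1, then [γ+q]_λ^{(2/β)} / [γ'+q']_{λ'}^{(β/2)} = (β/2)^{nN}, where λ' = (N^n). -/

import Mathlib

private lemma gamma_add_nat' (x : ℝ) (hx : 0 < x) (n : ℕ) :
    Real.Gamma (x + n) = (∏ k ∈ Finset.range n, (x + k)) * Real.Gamma x := by
  induction n with
  | zero => simp
  | succ n ih =>
    have h : x + (n : ℝ) ≠ 0 := by positivity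
    have e : x + ((n : ℕ) + 1 : ℕ) = (x + (n : ℝ)) + 1 := by push_cast; ring
    rw [e, Real.Gamma_add_one h, ih, Finset.prod_range_succ]
    ring

private lemma gamma_ratio (x : ℝ) (hx : 0 < x) (n : ℕ) :
    Real.Gamma (x + n) / Real.Gamma x = ∏ k ∈ Finset.range n, (x + k) := by
  rw [gamma_add_nat' x hx n]
  field_simp [(Real.Gamma_pos_of_pos hx).ne']

private lemma prod_reflect_real (m : ℕ) (g : ℝ → ℝ) :
    ∏ j ∈ Finset.range m, g ((m : ℝ) - 1 - (j : ℝ)) = ∏ j ∈ Finset.range m, g (j : ℝ) := by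
  rw [← Finset.prod_range_reflect (fun j => g (j : ℝ)) m]
  refine Finset.prod_congr rfl fun j hj => ?_
  have hjm := Finset.mem_range.mp hj
  congr 1
  have : ((m - 1 - j : ℕ) : ℝ) = (m : ℝ) - 1 - (j : ℝ) := by
    have h1 : (1 : ℕ) ≤ m := by omega
    have h2 : j ≤ m - 1 := by omega
    push_cast [Nat.cast_sub h2, Nat.cast_sub h1]
    ring
  rw [this]

/-- For the rectangular partition `λ = (n^N)` (so `λ' = (N^n)`), with
`α = 2/β`, `q = 1 + β(N−1)/2`, `q' = 1 + 2(n−1)/β`, `γ' = 2(γ+1)/β − 1`, the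
generalised factorials `[u]_λ^{(α)} = ∏_j Γ(u−(j−1)/α+λ_j)/Γ(u−(j−1)/α)`
satisfy `[γ+q]_λ^{(2/β)} / [γ'+q']_{λ'}^{(β/2)} = (β/2)^{nN}`. -/
theorem generalised_factorial_rectangular_ratio (β γ : ℝ) (hβ : 0 < β)
    (hγ : -1 < γ) (N n : ℕ) :
    (∏ j ∈ Finset.range N,
        Real.Gamma ((γ + (1 + β * (N - 1) / 2)) - (j : ℝ) * (β / 2) + n) /
          Real.Gamma ((γ + (1 + β * (N - 1) / 2)) - (j : ℝ) * (β / 2))) /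
      (∏ j ∈ Finset.range n,
        Real.Gamma (((2 * (γ + 1) / β - 1) + (1 + 2 * (n - 1) / β))
            - (j : ℝ) * (2 / β) + N) /
          Real.Gamma (((2 * (γ + 1) / β - 1) + (1 + 2 * (n - 1) / β))
            - (j : ℝ) * (2 / β)))
      = (β / 2) ^ (n * N) := by
  have hγ1 : 0 < γ + 1 := by linarith
  -- positivity of the arguments
  have hx : ∀ j ∈ Finset.range N, 0 < (γ + (1 + β * (N - 1) / 2)) - (j : ℝ) * (β / 2) := by
    intro j hj
    have hjN : (j : ℝ) ≤ (N : ℝ) - 1 := by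
      have := Finset.mem_range.mp hj
      have : (j : ℝ) + 1 ≤ (N : ℝ) := by exact_mod_cast this
      linarith
    nlinarith
  have hy : ∀ j ∈ Finset.range n, 0 < ((2 * (γ + 1) / β - 1) + (1 + 2 * (n - 1) / β))
      - (j : ℝ) * (2 / β) := by
    intro j hj
    have hjn : (j : ℝ) ≤ (n : ℝ) - 1 := by
      have := Finset.mem_range.mp hj
      have : (j : ℝ) + 1 ≤ (n : ℝ) := by exact_mod_cast this
      linarith
    have h1 : ((2 * (γ + 1) / β - 1) + (1 + 2 * (n - 1) / β)) - (j : ℝ) * (2 / β)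
        = (2 / β) * (γ + 1 + ((n : ℝ) - 1 - (j : ℝ))) := by field_simp; ring
    rw [h1]
    have : 0 ≤ (n : ℝ) - 1 - (j : ℝ) := by linarith
    positivity
  -- rewrite Gamma ratios as products
  rw [Finset.prod_congr rfl (fun j hj => gamma_ratio _ (hx j hj) n),
      Finset.prod_congr rfl (fun j hj => gamma_ratio _ (hy j hj) N)]
  -- denominator product: pull out (2/β) and reflect
  have hden : ∏ j ∈ Finset.range n, ∏ k ∈ Finset.range N,
      (((2 * (γ + 1) / β - 1) + (1 + 2 * (n - 1) / β)) - (j : ℝ) * (2 / β) + (k : ℝ))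
      = (2 / β) ^ (n * N) *
        ∏ j ∈ Finset.range n, ∏ k ∈ Finset.range N, (γ + 1 + (j : ℝ) + (k : ℝ) * (β / 2)) := by
    have step1 : ∀ j k : ℝ,
        ((2 * (γ + 1) / β - 1) + (1 + 2 * (n - 1) / β)) - j * (2 / β) + k
        = (2 / β) * (γ + 1 + ((n : ℝ) - 1 - j) + k * (β / 2)) := by
      intro j k; field_simp; ring
    calc ∏ j ∈ Finset.range n, ∏ k ∈ Finset.range N,
          (((2 * (γ + 1) / β - 1) + (1 + 2 * (n - 1) / β)) - (j : ℝ) * (2 / β) + (k : ℝ))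
        = ∏ j ∈ Finset.range n, ∏ k ∈ Finset.range N,
            ((2 / β) * (γ + 1 + ((n : ℝ) - 1 - (j : ℝ)) + (k : ℝ) * (β / 2))) := by
          refine Finset.prod_congr rfl fun j _ => Finset.prod_congr rfl fun k _ => step1 _ _
      _ = (2 / β) ^ (n * N) * ∏ j ∈ Finset.range n, ∏ k ∈ Finset.range N,
            (γ + 1 + ((n : ℝ) - 1 - (j : ℝ)) + (k : ℝ) * (β / 2)) := by
          rw [show n * N = N * n from Nat.mul_comm n N]
          simp [Finset.prod_mul_distrib, Finset.prod_const, mul_pow, ← pow_mul, div_pow]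
      _ = (2 / β) ^ (n * N) * ∏ j ∈ Finset.range n, ∏ k ∈ Finset.range N,
            (γ + 1 + (j : ℝ) + (k : ℝ) * (β / 2)) := by
          rw [prod_reflect_real n (fun x => ∏ k ∈ Finset.range N, (γ + 1 + x + (k : ℝ) * (β / 2)))]
  -- numerator product: reflect
  have hnum : ∏ j ∈ Finset.range N, ∏ k ∈ Finset.range n,
      ((γ + (1 + β * (N - 1) / 2)) - (j : ℝ) * (β / 2) + (k : ℝ))
      = ∏ j ∈ Finset.range n, ∏ k ∈ Finset.range N,
          (γ + 1 + (j : ℝ) + (k : ℝ) * (β / 2)) := by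
    have step1 : ∀ j k : ℝ,
        (γ + (1 + β * ((N : ℝ) - 1) / 2)) - j * (β / 2) + k
        = γ + 1 + k + ((N : ℝ) - 1 - j) * (β / 2) := by intro j k; ring
    calc ∏ j ∈ Finset.range N, ∏ k ∈ Finset.range n,
          ((γ + (1 + β * ((N : ℝ) - 1) / 2)) - (j : ℝ) * (β / 2) + (k : ℝ))
        = ∏ j ∈ Finset.range N, ∏ k ∈ Finset.range n,
            (γ + 1 + (k : ℝ) + ((N : ℝ) - 1 - (j : ℝ)) * (β / 2)) := by
          refine Finset.prod_congr rfl fun j _ => Finset.prod_congr rfl fun k _ => step1 _ _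
      _ = ∏ j ∈ Finset.range N, ∏ k ∈ Finset.range n,
            (γ + 1 + (k : ℝ) + (j : ℝ) * (β / 2)) := by
          rw [prod_reflect_real N (fun x => ∏ k ∈ Finset.range n, (γ + 1 + (k : ℝ) + x * (β / 2)))]
      _ = ∏ j ∈ Finset.range n, ∏ k ∈ Finset.range N,
            (γ + 1 + (j : ℝ) + (k : ℝ) * (β / 2)) := Finset.prod_comm
  rw [hnum, hden]
  have hQ : 0 < ∏ j ∈ Finset.range n, ∏ k ∈ Finset.range N,
      (γ + 1 + (j : ℝ) + (k : ℝ) * (β / 2)) := by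
    refine Finset.prod_pos fun j _ => Finset.prod_pos fun k _ => ?_
    positivity
  rw [div_eq_iff (by positivity)]
  rw [mul_comm ((2/β)^(n*N)) _, ← mul_assoc, mul_comm ((β/2)^(n*N)) _, mul_assoc,
      ← mul_pow]
  have : β / 2 * (2 / β) = 1 := by field_simp
  rw [this, one_pow, mul_one]
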